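/- Let f₁, f₂ be discrete Morse functions on a finite simplicial complex K differing by one birth-death pair: Cr_q(f₁) = Cr_q(f₂) for q ≠ i, i−1, and Cr_i(f₂) = Cr_i(f₁) ∪ {σ̃}, Cr_{i−1}(f₂) = Cr_{i−1}(f₁) ∪ {α̃}, with connectedness coefficient k = n^{f₂}(σ̃, α̃) ≠ 0. Then the death transition g : C_*^{f₂} → C_*^{f₁} composed with the birth transition h : C_*^{f₁} → C_*^{f₂} satisfies g ∘ h = id on C_*^{f₁}. -/
import Mathlib


open Classical
open scoped Classical

noncomputable section

/-- An abstract simplicial complex on a finite vertex set: a finite family of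
nonempty finite subsets closed under taking nonempty subsets. -/
structure SComplex (V : Type*) [DecidableEq V] where
  faces : Finset (Finset V)
  nonempty_of_mem : ∀ s ∈ faces, s.Nonempty
  down_closed : ∀ s ∈ faces, ∀ t ⊆ s, t.Nonempty → t ∈ faces

variable {V : Type*} [DecidableEq V] [Fintype V]

/-- `α` is a codimension-one face (facet) of `σ`. -/
def IsFacet {W : Type*} (α σ : Finset W) : Prop := α ⊆ σ ∧ σ.card = α.card + 1

/-- `f` is a discrete Morse function on `K`. -/
def SComplex.IsDMF (K : SComplex V) (f : Finset V → ℝ) : Prop :=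
  ∀ σ ∈ K.faces,
    (K.faces.filter (fun τ => IsFacet σ τ ∧ f τ ≤ f σ)).card ≤ 1 ∧
    (K.faces.filter (fun ν => IsFacet ν σ ∧ f σ ≤ f ν)).card ≤ 1

/-- `σ` is a critical simplex of `f`. -/
def SComplex.IsCritical (K : SComplex V) (f : Finset V → ℝ) (σ : Finset V) : Prop :=
  σ ∈ K.faces ∧
  (K.faces.filter (fun τ => IsFacet σ τ ∧ f τ ≤ f σ)).card = 0 ∧
  (K.faces.filter (fun ν => IsFacet ν σ ∧ f σ ≤ f ν)).card = 0

/-- The gradient vector field of `f`: pairs `(α,β)` with `α ≺ β`, `f α ≥ f β`. -/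
def SComplex.gvf (K : SComplex V) (f : Finset V → ℝ) : Finset (Finset V × Finset V) :=
  (K.faces ×ˢ K.faces).filter (fun p => IsFacet p.1 p.2 ∧ f p.2 ≤ f p.1)

/-- `M` is a matching on the Hasse diagram of `K`. -/
def SComplex.IsMatching (K : SComplex V) (M : Finset (Finset V × Finset V)) : Prop :=
  (∀ p ∈ M, p.1 ∈ K.faces ∧ p.2 ∈ K.faces ∧ IsFacet p.1 p.2) ∧
  (∀ p ∈ M, ∀ q ∈ M, p ≠ q → p.1 ≠ q.1 ∧ p.1 ≠ q.2 ∧ p.2 ≠ q.1 ∧ p.2 ≠ q.2)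

/-- One step of a `V`-path: from `a` go up to its matched simplex `β` and down to `b ≠ a`. -/
def PathStep (M : Finset (Finset V × Finset V)) (a b : Finset V) : Prop :=
  a ≠ b ∧ ∃ β, (a, β) ∈ M ∧ IsFacet b β

/-- A `V`-path, recorded by its list of lower-dimensional simplices. -/
def IsVPath (M : Finset (Finset V × Finset V)) : List (Finset V) → Prop
  | [] => False
  | [_] => True
  | a :: b :: rest => PathStep M a b ∧ IsVPath M (b :: rest)

/-- `M` has no nontrivial closed `V`-path. -/
def IsAcyclic (M : Finset (Finset V × Finset V)) : Prop :=
  ¬ ∃ (a : Finset V) (l : List (Finset V)), l ≠ [] ∧ IsVPath M (a :: (l ++ [a]))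

/-- An acyclic matching (gradient vector field) on `K`. -/
def SComplex.IsAcyclicMatching (K : SComplex V) (M : Finset (Finset V × Finset V)) : Prop :=
  K.IsMatching M ∧ IsAcyclic M

/-- The incidence number `[σ:α] = ±1` for a facet `α ≺ σ`. -/
def incidence (σ α : Finset V) : ℤ :=
  if IsFacet α σ then
    (-1 : ℤ) ^ ((σ.filter (fun w => ∀ v ∈ σ \ α,
      ((Fintype.equivFin V) w).val < ((Fintype.equivFin V) v).val)).card)
  else 0

/-- The simplex matched above `a` by `M` (or `∅` if `a` is unmatched). -/
def matchOf (M : Finset (Finset V × Finset V)) (a : Finset V) : Finset V :=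
  if h : ∃ β, (a, β) ∈ M then h.choose else ∅

/-- The weight `m(γ)` of a path: product of the incidence numbers along it. -/
def pathWeight (M : Finset (Finset V × Finset V)) : List (Finset V) → ℤ
  | [] => 1
  | [_] => 1
  | a :: b :: rest =>
      -(incidence (matchOf M a) a * incidence (matchOf M a) b) * pathWeight M (b :: rest)

/-- All duplicate-free lists with entries in `s`. -/
def nodupLists (s : Finset (Finset V)) : Finset (List (Finset V)) :=
  s.powerset.biUnion (fun t => t.val.toList.permutations.toFinset)

/-- The (finite) set of `M`-gradient paths in `K` from `a` to `b`. -/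
def SComplex.pathsBetween (K : SComplex V) (M : Finset (Finset V × Finset V))
    (a b : Finset V) : Finset (List (Finset V)) :=
  (nodupLists K.faces).filter
    (fun l => IsVPath M l ∧ l.head? = some a ∧ l.getLast? = some b)

/-- The connectedness coefficient `n^M(σ, α)`: signed count of gradient paths from
the boundary of `σ` to `α`, weighted by incidence numbers. -/
def SComplex.nCoeff (K : SComplex V) (M : Finset (Finset V × Finset V))
    (σ α : Finset V) : ℤ :=
  ∑ β ∈ K.faces.filter (fun β => IsFacet β σ),
    incidence σ β * ∑ l ∈ K.pathsBetween M β α, pathWeight M l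

/-- The 0-dimensional connectedness coefficient: signed count of paths from `a` to `b`. -/
def SComplex.nCoeff0 (K : SComplex V) (M : Finset (Finset V × Finset V))
    (a b : Finset V) : ℤ :=
  ∑ l ∈ K.pathsBetween M a b, pathWeight M l

end

noncomputable section

variable {V : Type*} [DecidableEq V] [Fintype V]

/-- Extend a map on basis simplices to a linear map on chains. -/
def extendLin (B : Finset V → (Finset V →₀ ℤ)) :
    (Finset V →₀ ℤ) →ₗ[ℤ] (Finset V →₀ ℤ) :=
  Finsupp.lsum ℤ (fun σ => LinearMap.toSpanSingleton ℤ _ (B σ))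

/-- The boundary operator of the discrete Morse complex of `f`, as a linear map on
the chains generated by all simplices (nonzero only on critical simplices):
`∂^f σ = Σ_α n^f(σ,α) α` over critical `α` of one lower dimension. -/
def morseBoundary (K : SComplex V) (f : Finset V → ℝ) :
    (Finset V →₀ ℤ) →ₗ[ℤ] (Finset V →₀ ℤ) :=
  extendLin (fun σ =>
    if K.IsCritical f σ then
      ∑ α ∈ K.faces.filter (fun α => K.IsCritical f α ∧ α.card + 1 = σ.card),
        K.nCoeff (K.gvf f) σ α • Finsupp.single α 1
    else 0)

/-- for discrete Morse functions `f₁, f₂` differing by one birth-death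
pair `(σ̃, α̃)` in dimensions `(i, i−1)` with `k = n^{f₂}(σ̃, α̃) ≠ 0`, the death
transition `g` composed with the birth transition `h` is the identity on `C_*^{f₁}`. -/
theorem death_comp_birth_eq_id (K : SComplex V)
    (f₁ f₂ : Finset V → ℝ) (hf₁ : K.IsDMF f₁) (hf₂ : K.IsDMF f₂)
    (i : ℕ) (hi : 1 ≤ i) (σt αt : Finset V)
    (hσK : σt ∈ K.faces) (hαK : αt ∈ K.faces)
    (hσdim : σt.card = i + 1) (hαdim : αt.card = i)
    (hσc₂ : K.IsCritical f₂ σt) (hαc₂ : K.IsCritical f₂ αt)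
    (hσc₁ : ¬ K.IsCritical f₁ σt) (hαc₁ : ¬ K.IsCritical f₁ αt)
    (hsame : ∀ δ, δ ≠ σt → δ ≠ αt → (K.IsCritical f₁ δ ↔ K.IsCritical f₂ δ))
    (k : ℤ) (hk : k = K.nCoeff (K.gvf f₂) σt αt) (hk0 : k ≠ 0)
    (h g : (Finset V →₀ ℤ) →ₗ[ℤ] (Finset V →₀ ℤ))
    -- the birth transition `h`
    (hbirth : ∀ δ, K.IsCritical f₁ δ →
      h (Finsupp.single δ 1) =
        if δ.card = i + 1 then
          Finsupp.single δ 1 + K.nCoeff (K.gvf f₁) δ σt • Finsupp.single σt 1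
        else Finsupp.single δ 1)
    -- the death transition `g`
    (hdeath₁ : ∀ δ, K.IsCritical f₂ δ → δ ≠ σt → δ ≠ αt →
      g (Finsupp.single δ 1) = Finsupp.single δ 1)
    (hdeath₂ : g (Finsupp.single σt 1) = 0)
    (hdeath₃ : g (Finsupp.single αt 1) =
      ∑ α ∈ K.faces.filter (fun α => K.IsCritical f₁ α ∧ α.card = i),
        K.nCoeff (K.gvf f₂) αt α • Finsupp.single α 1) :
    ∀ δ, K.IsCritical f₁ δ → g (h (Finsupp.single δ 1)) = Finsupp.single δ 1 := by
  intro δ hδ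
  have hne₁ : δ ≠ σt := fun e => hσc₁ (e ▸ hδ)
  have hne₂ : δ ≠ αt := fun e => hαc₁ (e ▸ hδ)
  have hδ₂ : K.IsCritical f₂ δ := (hsame δ hne₁ hne₂).mp hδ
  rw [hbirth δ hδ]
  by_cases hc : δ.card = i + 1
  · simp only [hc, if_pos, map_add, map_smul, hdeath₂, hdeath₁ δ hδ₂ hne₁ hne₂, smul_zero,
      add_zero]
  · simp [hc, hdeath₁ δ hδ₂ hne₁ hne₂]

end
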